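/- arXiv:2404.17487 — 3 statements merged into one kernel-verified Lean document; each statement's English description precedes it below -/
import Mathlib

section
/- Let S be a real-valued random variable whose distribution is L-Lipschitz (meaning P(S ≤ q') − P(S ≤ q) ≤ L(q' − q) for all q ≤ q') and suppose P(S = t) = 0 for all t. Let q* be a (1−α)-quantile of S and define γ(q) = E[ℓ_α(q, S)] and γ'(q) = P(S ≤ q) − (1 − α). Then for every q ∈ ℝ, γ(q) − γ(q*) ≥ γ'(q)² / (2L). -/
open MeasureTheory

/-- The pinball loss at level `α`. -/
noncomputable def pinball (α q s : ℝ) : ℝ :=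
  if s ≤ q then α * (q - s) else (1 - α) * (s - q)

lemma intmax_aux {Ω : Type*} [MeasurableSpace Ω] (μ : Measure Ω) [IsProbabilityMeasure μ]
    (S : Ω → ℝ) (hSmeas : Measurable S) (r q : ℝ) (hrq : r ≤ q) :
    Integrable (fun ω => max 0 (q - max r (S ω))) μ := by
  apply Integrable.mono' (integrable_const (q - r))
  · exact (measurable_const.max ((measurable_const.sub
      (measurable_const.max hSmeas)))).aestronglyMeasurable
  · filter_upwards with ω
    rw [Real.norm_eq_abs, abs_of_nonneg (le_max_left _ _)]
    exact max_le (by linarith) (by have := le_max_left r (S ω); linarith)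

lemma layercake_aux {Ω : Type*} [MeasurableSpace Ω] (μ : Measure Ω) [IsProbabilityMeasure μ]
    (S : Ω → ℝ) (hSmeas : Measurable S) (r q : ℝ) (hrq : r ≤ q) :
    ∫ ω, max 0 (q - max r (S ω)) ∂μ
      = ∫ t in Set.Ioo 0 (q - r), (μ {ω | S ω < q - t}).toReal := by
  set f : Ω → ℝ := fun ω => max 0 (q - max r (S ω)) with hf
  have hfb : ∀ ω, f ω ≤ q - r := fun ω =>
    max_le (by linarith) (by have := le_max_left r (S ω); linarith)
  have hint : Integrable f μ := intmax_aux μ S hSmeas r q hrq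
  rw [hint.integral_eq_integral_meas_lt (Filter.Eventually.of_forall fun ω => le_max_left _ _)]
  set m : ℝ → ℝ := fun t => (μ {a | t < f a}).toReal with hm
  have hmanti : Antitone m := fun s t hst =>
    ENNReal.toReal_mono (measure_ne_top μ _)
      (measure_mono (fun a ha => lt_of_le_of_lt hst ha))
  have hmzero : ∀ t ∈ Set.Ioi (q - r), m t = 0 := by
    intro t ht
    have : {a | t < f a} = ∅ := by
      ext a; simp only [Set.mem_setOf_eq, Set.mem_empty_iff_false, iff_false, not_lt]
      exact (hfb a).trans (le_of_lt ht)
    simp [hm, this]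
  have hsplit : Set.Ioc 0 (q - r) ∪ Set.Ioi (q - r) = Set.Ioi (0:ℝ) :=
    Set.Ioc_union_Ioi_eq_Ioi (by linarith)
  have hint1 : IntegrableOn m (Set.Ioc 0 (q - r)) volume :=
    (AntitoneOn.integrableOn_isCompact isCompact_Icc (hmanti.antitoneOn _)).mono_set
      Set.Ioc_subset_Icc_self
  have hint2 : IntegrableOn m (Set.Ioi (q - r)) volume :=
    integrableOn_zero.congr_fun (fun t ht => (hmzero t ht).symm) measurableSet_Ioi
  change ∫ t in Set.Ioi 0, m t = _
  rw [← hsplit, setIntegral_union (Set.Ioc_disjoint_Ioi le_rfl) measurableSet_Ioi hint1 hint2,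
    setIntegral_congr_fun measurableSet_Ioi hmzero, integral_zero, add_zero,
    integral_Ioc_eq_integral_Ioo]
  apply setIntegral_congr_fun measurableSet_Ioo
  intro t ht
  obtain ⟨ht0, htd⟩ := ht
  have hset : {a | t < f a} = {a | S a < q - t} := by
    ext a
    simp only [Set.mem_setOf_eq, hf, lt_max_iff]
    constructor
    · rintro (h | h)
      · linarith
      · have := le_max_right r (S a); linarith
    · intro h
      right
      have : max r (S a) < q - t := max_lt (by linarith) h
      linarith
  simp only [hm, hset]

lemma integrable_pinball {Ω : Type*} [MeasurableSpace Ω] (μ : Measure Ω) [IsProbabilityMeasure μ]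
    (S : Ω → ℝ) (hSmeas : Measurable S) (hS01 : ∀ᵐ ω ∂μ, S ω ∈ Set.Icc (0:ℝ) 1)
    (α : ℝ) (hα : α ∈ Set.Ioo (0:ℝ) 1) (p : ℝ) :
    Integrable (fun ω => pinball α p (S ω)) μ := by
  have hm : Measurable (pinball α p) := by
    unfold pinball
    exact Measurable.ite (measurableSet_le measurable_id measurable_const)
      (by fun_prop) (by fun_prop)
  apply Integrable.mono' (integrable_const (|p| + 1)) ((hm.comp hSmeas).aestronglyMeasurable)
  filter_upwards [hS01] with ω hω
  obtain ⟨h0, h1⟩ := hω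
  rw [Real.norm_eq_abs]
  simp only [Function.comp_apply]
  unfold pinball
  rcases le_or_gt (S ω) p with h | h
  · rw [if_pos h, abs_of_nonneg (mul_nonneg hα.1.le (by linarith))]
    nlinarith [le_abs_self p, hα.1, hα.2]
  · rw [if_neg (not_le.mpr h), abs_of_nonneg (mul_nonneg (by linarith [hα.2]) (by linarith))]
    nlinarith [neg_abs_le p, hα.1, hα.2]

lemma pinball_diff (α r q s : ℝ) (h : r ≤ q) :
    pinball α q s - pinball α r s = max 0 (q - max r s) - (1-α)*(q-r) := by
  unfold pinball
  rcases le_or_gt s r with h1 | h1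
  · rw [if_pos h1, if_pos (h1.trans h), max_eq_left h1, max_eq_right (by linarith)]
    ring
  · rw [if_neg (not_le.mpr h1), max_eq_right h1.le]
    rcases le_or_gt s q with h2 | h2
    · rw [if_pos h2, max_eq_right (by linarith)]; ring
    · rw [if_neg (not_le.mpr h2), max_eq_left (by linarith)]; ring


/-- If the law of `S` is `L`-Lipschitz and atomless, `q*` is a `(1−α)`-quantile of `S`,
`γ(q) = E[ℓ_α(q,S)]` and `γ'(q) = P(S ≤ q) − (1−α)`, then
`γ(q) − γ(q*) ≥ γ'(q)²/(2L)` for every `q`. -/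
theorem pinball_suboptimality_lower_bound
    {Ω : Type*} [MeasurableSpace Ω] (μ : Measure Ω) [IsProbabilityMeasure μ]
    (S : Ω → ℝ) (hSmeas : Measurable S) (hS01 : ∀ᵐ ω ∂μ, S ω ∈ Set.Icc (0:ℝ) 1)
    (L : ℝ) (hL : 0 < L)
    (hLip : ∀ q q' : ℝ, q ≤ q' →
      (μ {ω | S ω ≤ q'}).toReal - (μ {ω | S ω ≤ q}).toReal ≤ L * (q' - q))
    (hatomless : ∀ t : ℝ, μ {ω | S ω = t} = 0)
    (α : ℝ) (hα : α ∈ Set.Ioo (0:ℝ) 1)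
    (qstar : ℝ)
    (hq1 : (μ {ω | S ω ≤ qstar}).toReal ≥ 1 - α)
    (hq2 : (μ {ω | qstar ≤ S ω}).toReal ≥ α)
    (γ γ' : ℝ → ℝ)
    (hγ : ∀ q, γ q = ∫ ω, pinball α q (S ω) ∂μ)
    (hγ' : ∀ q, γ' q = (μ {ω | S ω ≤ q}).toReal - (1 - α)) :
    ∀ q : ℝ, γ q - γ qstar ≥ (γ' q) ^ 2 / (2 * L) := by
  intro q
  obtain ⟨hα0, hα1⟩ := hα
  set F : ℝ → ℝ := fun t => (μ {ω | S ω ≤ t}).toReal with hF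
  have hFmono : Monotone F := fun a b hab =>
    ENNReal.toReal_mono (measure_ne_top μ _) (measure_mono fun ω hω => le_trans hω hab)
  have hlt_eq : ∀ c : ℝ, (μ {ω | S ω < c}).toReal = F c := by
    intro c
    have h1 : μ {ω | S ω ≤ c} ≤ μ {ω | S ω < c} := by
      calc μ {ω | S ω ≤ c} ≤ μ ({ω | S ω < c} ∪ {ω | S ω = c}) :=
            measure_mono (fun ω (hω : S ω ≤ c) =>
              (hω.lt_or_eq.imp (fun h => h) (fun h => h) :
                S ω < c ∨ S ω = c))
        _ ≤ μ {ω | S ω < c} + μ {ω | S ω = c} := measure_union_le _ _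
        _ = μ {ω | S ω < c} := by rw [hatomless c, add_zero]
    exact congrArg ENNReal.toReal
      (le_antisymm (measure_mono fun ω (hω : S ω < c) => le_of_lt hω) h1)
  have hFq : F qstar = 1 - α := by
    refine le_antisymm ?_ hq1
    have hc : {ω | qstar ≤ S ω} = {ω | S ω < qstar}ᶜ := by
      ext ω; simp [not_lt]
    have hmeas : MeasurableSet {ω | S ω < qstar} := hSmeas measurableSet_Iio
    have h2 := hq2
    rw [hc, prob_compl_eq_one_sub hmeas,
      ENNReal.toReal_sub_of_le prob_le_one ENNReal.one_ne_top, ENNReal.toReal_one,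
      hlt_eq qstar] at h2
    linarith
  have hpint : ∀ p : ℝ, Integrable (fun ω => pinball α p (S ω)) μ :=
    integrable_pinball μ S hSmeas hS01 α ⟨hα0, hα1⟩
  have hγdiff : ∀ r p : ℝ, r ≤ p →
      γ p - γ r = (∫ ω, max 0 (p - max r (S ω)) ∂μ) - (1-α)*(p-r) := by
    intro r p hrp
    rw [hγ p, hγ r, ← integral_sub (hpint p) (hpint r)]
    have heq : (fun ω => pinball α p (S ω) - pinball α r (S ω))
        = fun ω => max 0 (p - max r (S ω)) - (1-α)*(p-r) :=
      funext fun ω => pinball_diff α r p (S ω) hrp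
    rw [heq, integral_sub (intmax_aux μ S hSmeas r p hrp) (integrable_const _),
      integral_const]
    simp
  have hmin_ge : ∀ p : ℝ, qstar ≤ p → γ qstar ≤ γ p := by
    intro p hp
    have hdiff := hγdiff qstar p hp
    have hptw : ∀ ω, Set.indicator {ω | S ω ≤ qstar} (fun _ => p - qstar) ω
        ≤ max 0 (p - max qstar (S ω)) := by
      intro ω
      by_cases h : ω ∈ {ω | S ω ≤ qstar}
      · rw [Set.indicator_of_mem h]
        have hmax : max qstar (S ω) = qstar := max_eq_left h
        rw [hmax]
        exact le_max_right _ _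
      · rw [Set.indicator_of_notMem h]
        exact le_max_left _ _
    have hind : Integrable (fun ω => Set.indicator {ω | S ω ≤ qstar}
        (fun _ => p - qstar) ω) μ :=
      (integrable_const (p - qstar)).indicator (measurableSet_le hSmeas measurable_const)
    have hle := integral_mono hind (intmax_aux μ S hSmeas qstar p hp) hptw
    rw [integral_indicator_const _ (measurableSet_le hSmeas measurable_const)] at hle
    have : (μ {ω | S ω ≤ qstar}).toReal • (p - qstar) = (1-α)*(p-qstar) := by
      rw [smul_eq_mul]
      change F qstar * (p - qstar) = _
      rw [hFq]
    rw [measureReal_def, this] at hle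
    linarith
  have hmin_le : ∀ p : ℝ, p ≤ qstar → γ qstar ≤ γ p := by
    intro p hp
    have hdiff := hγdiff p qstar hp
    have hptw : ∀ ω, max 0 (qstar - max p (S ω))
        ≤ Set.indicator {ω | S ω < qstar} (fun _ => qstar - p) ω := by
      intro ω
      by_cases h : ω ∈ {ω | S ω < qstar}
      · rw [Set.indicator_of_mem h]
        exact max_le (by linarith) (by have := le_max_left p (S ω); linarith)
      · rw [Set.indicator_of_notMem h]
        have hs : qstar ≤ S ω := not_lt.mp h
        have := le_max_right p (S ω)
        exact max_le le_rfl (by linarith)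
    have hind : Integrable (fun ω => Set.indicator {ω | S ω < qstar}
        (fun _ => qstar - p) ω) μ :=
      (integrable_const (qstar - p)).indicator (measurableSet_lt hSmeas measurable_const)
    have hle := integral_mono (intmax_aux μ S hSmeas p qstar hp) hind hptw
    rw [integral_indicator_const _ (measurableSet_lt hSmeas measurable_const)] at hle
    have : (μ {ω | S ω < qstar}).toReal • (qstar - p) = (1-α)*(qstar-p) := by
      rw [smul_eq_mul, hlt_eq qstar, hFq]
    rw [measureReal_def, this] at hle
    linarith
  have hγq : γ' q = F q - (1 - α) := hγ' q
  rcases le_total qstar q with hcase | hcase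
  · -- q ≥ qstar
    set d := γ' q / L with hd
    have hg0 : 0 ≤ γ' q := by
      rw [hγq, ← hFq]
      have := hFmono hcase
      linarith
    have hd0 : 0 ≤ d := div_nonneg hg0 hL.le
    have hdle : d ≤ q - qstar := by
      rw [hd, div_le_iff₀ hL]
      have h2 := hLip qstar q hcase
      rw [hγq, ← hFq]
      change F q - F qstar ≤ _ at h2
      linarith
    set r := q - d with hr
    have hrq : r ≤ q := by rw [hr]; linarith
    have h1 : γ qstar ≤ γ r := hmin_ge r (by rw [hr]; linarith)
    have hqr : q - r = d := by rw [hr]; ring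
    have h2 : γ q - γ r ≥ γ' q * d - L * d^2 / 2 := by
      rw [hγdiff r q hrq, layercake_aux μ S hSmeas r q hrq, hqr]
      have hmono_int : IntegrableOn (fun t => F (q - t)) (Set.Ioo 0 d) volume :=
        (AntitoneOn.integrableOn_isCompact (isCompact_Icc (a := 0) (b := d))
          (fun x _ y _ hxy => hFmono (by linarith))).mono_set Set.Ioo_subset_Icc_self
      have hlin_int : IntegrableOn (fun t => F q - L * t) (Set.Ioo 0 d) volume :=
        ((continuous_const.sub (continuous_const.mul continuous_id)).integrableOn_Icc
          (a := 0) (b := d)).mono_set Set.Ioo_subset_Icc_self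
      have key : ∫ t in Set.Ioo 0 d, (F q - L * t)
          ≤ ∫ t in Set.Ioo 0 d, (μ {ω | S ω < q - t}).toReal := by
        simp_rw [hlt_eq]
        refine setIntegral_mono_on hlin_int hmono_int measurableSet_Ioo ?_
        intro t ht
        have hl := hLip (q - t) q (by linarith [ht.1])
        change F q - F (q - t) ≤ _ at hl
        have : L * (q - (q - t)) = L * t := by ring
        rw [this] at hl
        linarith
      have hcomp : ∫ t in Set.Ioo 0 d, (F q - L * t) = F q * d - L * d^2 / 2 := by
        rw [← integral_Ioc_eq_integral_Ioo, ← intervalIntegral.integral_of_le hd0,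
          intervalIntegral.integral_sub intervalIntegrable_const
            (intervalIntegral.intervalIntegrable_id.const_mul L),
          intervalIntegral.integral_const, intervalIntegral.integral_const_mul, integral_id]
        simp only [smul_eq_mul]
        ring
      have hgd : γ' q * d = F q * d - (1-α) * d := by rw [hγq]; ring
      linarith
    have harith : γ' q * d - L * d^2 / 2 = (γ' q)^2 / (2*L) := by
      rw [hd]; field_simp; ring
    linarith
  · -- q ≤ qstar
    set d := -(γ' q) / L with hd
    have hg0 : γ' q ≤ 0 := by
      rw [hγq, ← hFq]
      have := hFmono hcase
      linarith
    have hd0 : 0 ≤ d := div_nonneg (by linarith) hL.le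
    have hdle : d ≤ qstar - q := by
      rw [hd, div_le_iff₀ hL]
      have h2 := hLip q qstar hcase
      rw [hγq, ← hFq]
      change F qstar - F q ≤ _ at h2
      linarith
    set r := q + d with hr
    have hqr' : q ≤ r := by rw [hr]; linarith
    have h1 : γ qstar ≤ γ r := hmin_le r (by rw [hr]; linarith)
    have hqr : r - q = d := by rw [hr]; ring
    have h2 : γ q - γ r ≥ (-(γ' q)) * d - L * d^2 / 2 := by
      have hdiff := hγdiff q r hqr'
      rw [layercake_aux μ S hSmeas q r hqr', hqr] at hdiff
      have hmono_int : IntegrableOn (fun t => F (r - t)) (Set.Ioo 0 d) volume :=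
        (AntitoneOn.integrableOn_isCompact (isCompact_Icc (a := 0) (b := d))
          (fun x _ y _ hxy => hFmono (by linarith))).mono_set Set.Ioo_subset_Icc_self
      have hlin_int : IntegrableOn (fun t => F q + L * (d - t)) (Set.Ioo 0 d) volume :=
        ((continuous_const.add (continuous_const.mul
          (continuous_const.sub continuous_id))).integrableOn_Icc
          (a := 0) (b := d)).mono_set Set.Ioo_subset_Icc_self
      have key : ∫ t in Set.Ioo 0 d, (μ {ω | S ω < r - t}).toReal
          ≤ ∫ t in Set.Ioo 0 d, (F q + L * (d - t)) := by
        simp_rw [hlt_eq]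
        refine setIntegral_mono_on hmono_int hlin_int measurableSet_Ioo ?_
        intro t ht
        have hl := hLip q (r - t) (by rw [hr]; linarith [ht.2])
        change F (r - t) - F q ≤ _ at hl
        have : L * (r - t - q) = L * (d - t) := by rw [hr]; ring
        rw [this] at hl
        linarith
      have hcomp : ∫ t in Set.Ioo 0 d, (F q + L * (d - t)) = F q * d + L * d^2 / 2 := by
        rw [← integral_Ioc_eq_integral_Ioo, ← intervalIntegral.integral_of_le hd0]
        have : (fun t => F q + L * (d - t)) = fun t => (F q + L * d) - L * t := by
          funext t; ring
        rw [this, intervalIntegral.integral_sub intervalIntegrable_const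
            (intervalIntegral.intervalIntegrable_id.const_mul L),
          intervalIntegral.integral_const, intervalIntegral.integral_const_mul, integral_id]
        simp only [smul_eq_mul]
        ring
      have hgd : (1-α) * d - F q * d = (-(γ' q)) * d := by rw [hγq]; ring
      linarith
    have harith : (-(γ' q)) * d - L * d^2 / 2 = (γ' q)^2 / (2*L) := by
      rw [hd]; field_simp; ring
    linarith
end

section
/- Let Q be an integrable real-valued random variable with mean μ and finite variance. For any integer m ≥ 2, there exist real numbers q₁, …, q_m such that E[min_{1 ≤ i ≤ m} |Q − q_i|] ≤ 2√(Var(Q)/(m−1)). -/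
open MeasureTheory

lemma grid_bound (c η : ℝ) (hη : 0 < η) (n : ℕ) (hn : 1 ≤ n) (x : ℝ) (hx : |x - c| ≤ η) :
    ∃ k : ℕ, k < n ∧ |x - (c - η + (2 * k + 1) * η / n)| ≤ η / n := by
  have hn' : (1 : ℝ) ≤ (n : ℝ) := by exact_mod_cast hn
  set h : ℝ := η / n with hh
  have hhpos : 0 < h := div_pos hη (by linarith)
  have hnh : (n : ℝ) * h = η := by rw [hh]; field_simp [show (n : ℝ) ≠ 0 by linarith]
  set s : ℝ := x - c + η with hs
  have hs0 : 0 ≤ s := by rw [abs_le] at hx; linarith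
  have hs2 : s ≤ 2 * (n : ℝ) * h := by rw [abs_le] at hx; nlinarith
  set k0 : ℕ := ⌊s / (2 * h)⌋₊ with hk0
  have h2h : 0 < 2 * h := by linarith
  have hlow : (k0 : ℝ) * (2 * h) ≤ s := (le_div_iff₀ h2h).mp (Nat.floor_le (by positivity))
  have hhigh : s < ((k0 : ℝ) + 1) * (2 * h) := by
    have := Nat.lt_floor_add_one (s / (2 * h))
    exact (div_lt_iff₀ h2h).mp this
  by_cases hk : k0 < n
  · refine ⟨k0, hk, ?_⟩
    have : x - (c - η + (2 * k0 + 1) * η / n) = s - (2 * (k0:ℝ) + 1) * h := by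
      rw [hs, hh]; ring
    rw [this, abs_le]
    constructor <;> nlinarith
  · refine ⟨n - 1, by omega, ?_⟩
    push_cast [Nat.cast_sub hn]
    have hnk : (n : ℝ) ≤ (k0 : ℝ) := by exact_mod_cast Nat.le_of_not_lt hk
    have hseq : s = 2 * (n : ℝ) * h := by nlinarith
    have : x - (c - η + (2 * ((n:ℝ) - 1) + 1) * η / n) = s - (2 * ((n:ℝ) - 1) + 1) * h := by
      rw [hs, hh]; ring
    rw [this, hseq, abs_le]
    constructor <;> nlinarith

/-- Quantization bound: for an integrable random variable `Q` with finite variance and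
any `m ≥ 2`, there exist levels `q₁, …, q_m` with
`E[minᵢ |Q − qᵢ|] ≤ 2√(Var(Q)/(m−1))`. -/
theorem quantization_error_bound
    {Ω : Type*} [MeasurableSpace Ω] (μ : Measure Ω) [IsProbabilityMeasure μ]
    (Q : Ω → ℝ) (hQmeas : Measurable Q) (hQint : Integrable Q μ)
    (μQ : ℝ) (hμQ : μQ = ∫ ω, Q ω ∂μ)
    (hvar : Integrable (fun ω => (Q ω - μQ) ^ 2) μ)
    (m : ℕ) (hm : 2 ≤ m) :
    ∃ q : Fin m → ℝ,
      ∫ ω, (⨅ i : Fin m, |Q ω - q i|) ∂μ ≤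
        2 * Real.sqrt ((∫ ω, (Q ω - μQ) ^ 2 ∂μ) / (m - 1)) := by
  set V : ℝ := ∫ ω, (Q ω - μQ) ^ 2 ∂μ with hV
  have hVnn : 0 ≤ V := integral_nonneg fun ω => sq_nonneg _
  have hm' : (1 : ℝ) ≤ (m : ℝ) - 1 := by
    have : (2 : ℝ) ≤ (m : ℝ) := by exact_mod_cast hm
    linarith
  have hmne : Nonempty (Fin m) := ⟨⟨0, by omega⟩⟩
  rcases eq_or_lt_of_le hVnn with hV0 | hVpos
  · -- degenerate case V = 0
    refine ⟨fun _ => μQ, ?_⟩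
    have hae : (fun ω => (Q ω - μQ) ^ 2) =ᵐ[μ] 0 :=
      (integral_eq_zero_iff_of_nonneg (fun ω => sq_nonneg _) hvar).mp hV0.symm
    have hae' : (fun ω => ⨅ _ : Fin m, |Q ω - μQ|) =ᵐ[μ] 0 := by
      filter_upwards [hae] with ω hω
      simp only [Pi.zero_apply] at hω ⊢
      rw [ciInf_const]
      have : Q ω - μQ = 0 := by nlinarith [sq_nonneg (Q ω - μQ)]
      simp [this]
    rw [integral_congr_ae hae']
    simp only [Pi.zero_apply, integral_zero]
    positivity
  · -- main case V > 0
    set η : ℝ := Real.sqrt (((m : ℝ) - 1) * V) with hη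
    have hηpos : 0 < η := Real.sqrt_pos.mpr (by nlinarith)
    refine ⟨fun i => if (i : ℕ) < m - 1 then μQ - η + (2 * (i : ℕ) + 1) * η / ((m : ℕ) - 1 : ℕ) else μQ, ?_⟩
    set q : Fin m → ℝ :=
      fun i => if (i : ℕ) < m - 1 then μQ - η + (2 * (i : ℕ) + 1) * η / ((m : ℕ) - 1 : ℕ) else μQ with hq
    have hcast : (((m - 1 : ℕ) : ℝ)) = (m : ℝ) - 1 := by
      push_cast [Nat.cast_sub (by omega : 1 ≤ m)]; ring
    -- pointwise bound
    have hpt : ∀ ω, (⨅ i : Fin m, |Q ω - q i|) ≤ η / ((m : ℝ) - 1) + (Q ω - μQ) ^ 2 / η := by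
      intro ω
      have hbdd : BddBelow (Set.range fun i : Fin m => |Q ω - q i|) :=
        (Set.finite_range _).bddBelow
      by_cases hωc : |Q ω - μQ| ≤ η
      · obtain ⟨k, hk, hkb⟩ := grid_bound μQ η hηpos (m - 1) (by omega) (Q ω) hωc
        have hkm : k < m := by omega
        have hqk : q ⟨k, hkm⟩ = μQ - η + (2 * k + 1) * η / ((m - 1 : ℕ) : ℝ) := by
          simp [hq, hk]
        calc (⨅ i : Fin m, |Q ω - q i|) ≤ |Q ω - q ⟨k, hkm⟩| := ciInf_le hbdd _
          _ ≤ η / ((m - 1 : ℕ) : ℝ) := by rw [hqk]; exact hkb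
          _ ≤ η / ((m : ℝ) - 1) + (Q ω - μQ) ^ 2 / η := by
              rw [hcast]
              have : 0 ≤ (Q ω - μQ) ^ 2 / η := by positivity
              linarith
      · -- use the last index, q = μQ
        push_neg at hωc
        have hlast : (m - 1) < m := by omega
        have hqlast : q ⟨m - 1, hlast⟩ = μQ := by simp [hq]
        calc (⨅ i : Fin m, |Q ω - q i|) ≤ |Q ω - q ⟨m - 1, hlast⟩| := ciInf_le hbdd _
          _ = |Q ω - μQ| := by rw [hqlast]
          _ ≤ (Q ω - μQ) ^ 2 / η := by
              rw [le_div_iff₀ hηpos]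
              nlinarith [abs_nonneg (Q ω - μQ), sq_abs (Q ω - μQ)]
          _ ≤ η / ((m : ℝ) - 1) + (Q ω - μQ) ^ 2 / η := by
              have : 0 ≤ η / ((m : ℝ) - 1) := by positivity
              linarith
    -- integrate
    have hint : Integrable (fun ω => η / ((m : ℝ) - 1) + (Q ω - μQ) ^ 2 / η) μ :=
      (integrable_const _).add (hvar.div_const η)
    have hInt : ∫ ω, (⨅ i : Fin m, |Q ω - q i|) ∂μ ≤
        ∫ ω, (η / ((m : ℝ) - 1) + (Q ω - μQ) ^ 2 / η) ∂μ := by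
      refine integral_mono_of_nonneg ?_ hint (Filter.Eventually.of_forall hpt)
      exact Filter.Eventually.of_forall fun ω => Real.iInf_nonneg fun i => abs_nonneg _
    have hIntval : ∫ ω, (η / ((m : ℝ) - 1) + (Q ω - μQ) ^ 2 / η) ∂μ
        = η / ((m : ℝ) - 1) + V / η := by
      rw [integral_add (integrable_const _) (hvar.div_const η), integral_const,
        integral_div]
      simp [hV]
    -- arithmetic
    have harith : η / ((m : ℝ) - 1) + V / η = 2 * Real.sqrt (V / ((m : ℝ) - 1)) := by
      have hb : (0:ℝ) < (m : ℝ) - 1 := by linarith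
      have h1 : η = Real.sqrt ((m : ℝ) - 1) * Real.sqrt V := by
        rw [hη, Real.sqrt_mul (le_of_lt hb)]
      have hsb : Real.sqrt ((m : ℝ) - 1) ^ 2 = (m : ℝ) - 1 := Real.sq_sqrt (le_of_lt hb)
      have hsV : Real.sqrt V ^ 2 = V := Real.sq_sqrt hVnn
      have hsbpos : 0 < Real.sqrt ((m : ℝ) - 1) := Real.sqrt_pos.mpr hb
      have hsVpos : 0 < Real.sqrt V := Real.sqrt_pos.mpr hVpos
      rw [Real.sqrt_div hVnn, h1]
      field_simp
      linear_combination (Real.sqrt V ^ 2) * hsb -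
        ((m:ℝ) - 1) * hsV
    rw [hIntval] at hInt
    calc ∫ ω, (⨅ i : Fin m, |Q ω - q i|) ∂μ ≤ η / ((m : ℝ) - 1) + V / η := hInt
      _ = 2 * Real.sqrt (V / ((m : ℝ) - 1)) := harith
end

section
/- Let (X, S) be random variables with S ∈ [0,1] a.s. and conditional quantile function q_{1−α}(x) having finite variance Var(q_{1−α}(X)). For any m ≥ 2, the gap between the minimum over all measurable h : 𝒳 → Δ_m and q ∈ ℝ^m of E[Σ_i h^i(X) ℓ_α(q_i, S)] and the optimum E[ℓ_α(q_{1−α}(X), S)] satisfies 0 ≤ min − optimum ≤ 2√(Var(q_{1−α}(X))/(m−1)). -/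
open MeasureTheory ProbabilityTheory
open scoped BigOperators

lemma pinball_nonneg {α : ℝ} (h0 : 0 ≤ α) (h1 : α ≤ 1) (q s : ℝ) : 0 ≤ pinball α q s := by
  unfold pinball; split_ifs <;> nlinarith

lemma pinball_le_abs {α : ℝ} (h0 : 0 ≤ α) (h1 : α ≤ 1) (q s : ℝ) : pinball α q s ≤ |s - q| := by
  unfold pinball; split_ifs with h
  · rw [abs_of_nonpos (by linarith)]; nlinarith
  · rw [abs_of_nonneg (by linarith)]; nlinarith

lemma pinball_lipschitz {α : ℝ} (h0 : 0 ≤ α) (h1 : α ≤ 1) (q q' s : ℝ) :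
    pinball α q s ≤ pinball α q' s + |q - q'| := by
  unfold pinball
  rcases abs_cases (q - q') with ⟨he, _⟩ | ⟨he, _⟩ <;> split_ifs <;> rw [he] <;> nlinarith

lemma pinball_measurable2 (α : ℝ) : Measurable (fun p : ℝ × ℝ => pinball α p.1 p.2) := by
  unfold pinball
  exact Measurable.ite (measurableSet_le measurable_snd measurable_fst)
    (measurable_const.mul (measurable_fst.sub measurable_snd))
    (measurable_const.mul (measurable_snd.sub measurable_fst))

lemma pinball_measurable (α q : ℝ) : Measurable (pinball α q) :=
  (pinball_measurable2 α).comp (measurable_const.prodMk measurable_id)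

lemma ae_mem_Icc {ν : Measure ℝ} (hν : ν (Set.Icc (0:ℝ) 1)ᶜ = 0) :
    ∀ᵐ s ∂ν, s ∈ Set.Icc (0:ℝ) 1 :=
  ae_iff.2 hν

lemma pinball_ae_bound {ν : Measure ℝ} (hν : ν (Set.Icc (0:ℝ) 1)ᶜ = 0)
    {α : ℝ} (h0 : 0 ≤ α) (h1 : α ≤ 1) (q : ℝ) :
    ∀ᵐ s ∂ν, ‖pinball α q s‖ ≤ |q| + 1 := by
  filter_upwards [ae_mem_Icc hν] with s hs
  rw [Real.norm_eq_abs, abs_of_nonneg (pinball_nonneg h0 h1 q s)]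
  calc pinball α q s ≤ |s - q| := pinball_le_abs h0 h1 q s
    _ ≤ |s| + |q| := abs_sub _ _
    _ ≤ |q| + 1 := by
        rw [abs_of_nonneg hs.1]; linarith [hs.2]

lemma pinball_integrable {ν : Measure ℝ} [IsProbabilityMeasure ν]
    (hν : ν (Set.Icc (0:ℝ) 1)ᶜ = 0) {α : ℝ} (h0 : 0 ≤ α) (h1 : α ≤ 1) (q : ℝ) :
    Integrable (pinball α q) ν :=
  Integrable.mono' (integrable_const (|q| + 1))
    (pinball_measurable α q).aestronglyMeasurable (pinball_ae_bound hν h0 h1 q)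

lemma pinball_integral_bound {ν : Measure ℝ} [IsProbabilityMeasure ν]
    (hν : ν (Set.Icc (0:ℝ) 1)ᶜ = 0) {α : ℝ} (h0 : 0 ≤ α) (h1 : α ≤ 1) (q : ℝ) :
    ‖∫ s, pinball α q s ∂ν‖ ≤ |q| + 1 := by
  have := norm_integral_le_of_norm_le_const (μ := ν) (pinball_ae_bound hν h0 h1 q)
  simpa using this

lemma pinball_diff_ge_right {α q0 q : ℝ} (h0 : 0 ≤ α) (h1 : α ≤ 1) (hq : q0 ≤ q) (s : ℝ) :
    α * (q - q0) - (q - q0) * (Set.Ioi q0).indicator (fun _ => (1:ℝ)) s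
      ≤ pinball α q s - pinball α q0 s := by
  by_cases hs : s ∈ Set.Ioi q0
  · rw [Set.indicator_of_mem hs]
    simp only [Set.mem_Ioi] at hs
    unfold pinball; split_ifs <;> nlinarith
  · rw [Set.indicator_of_notMem hs]
    simp only [Set.mem_Ioi, not_lt] at hs
    unfold pinball; split_ifs <;> nlinarith

lemma pinball_diff_ge_left {α q0 q : ℝ} (h0 : 0 ≤ α) (h1 : α ≤ 1) (hq : q ≤ q0) (s : ℝ) :
    (1 - α) * (q0 - q) - (q0 - q) * (Set.Iio q0).indicator (fun _ => (1:ℝ)) s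
      ≤ pinball α q s - pinball α q0 s := by
  by_cases hs : s ∈ Set.Iio q0
  · rw [Set.indicator_of_mem hs]
    simp only [Set.mem_Iio] at hs
    unfold pinball; split_ifs <;> nlinarith
  · rw [Set.indicator_of_notMem hs]
    simp only [Set.mem_Iio, not_lt] at hs
    unfold pinball; split_ifs <;> nlinarith

lemma quantile_opt {ν : Measure ℝ} [IsProbabilityMeasure ν]
    (hν : ν (Set.Icc (0:ℝ) 1)ᶜ = 0) {α : ℝ} (hα : α ∈ Set.Ioo (0:ℝ) 1) {q0 : ℝ}
    (hq1 : (ν (Set.Iic q0)).toReal ≥ 1 - α) (hq2 : (ν (Set.Ici q0)).toReal ≥ α) (q : ℝ) :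
    ∫ s, pinball α q0 s ∂ν ≤ ∫ s, pinball α q s ∂ν := by
  obtain ⟨hα0, hα1⟩ := hα
  have hint0 := pinball_integrable hν hα0.le hα1.le q0
  have hintq := pinball_integrable hν hα0.le hα1.le q
  have key : 0 ≤ ∫ s, (pinball α q s - pinball α q0 s) ∂ν := by
    rcases le_total q0 q with hq | hq
    · have hI : (ν (Set.Ioi q0)).toReal ≤ α := by
        have hc : ν (Set.Ioi q0) = 1 - ν (Set.Iic q0) := by
          rw [← Set.compl_Iic, measure_compl measurableSet_Iic (measure_ne_top ν _)]
          simp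
        have hle : ν (Set.Iic q0) ≤ 1 := prob_le_one
        rw [hc, ENNReal.toReal_sub_of_le hle (by simp)]
        simp only [ENNReal.toReal_one]
        linarith
      have hmono := integral_mono
        (Integrable.sub (integrable_const (α * (q - q0)))
          ((integrable_const (1:ℝ)).indicator measurableSet_Ioi |>.const_mul (q - q0)))
        (hintq.sub hint0)
        (fun s => pinball_diff_ge_right hα0.le hα1.le hq s)
      simp only [Pi.sub_apply] at hmono
      refine le_trans ?_ hmono
      rw [integral_sub (integrable_const _)
        (((integrable_const (1:ℝ)).indicator measurableSet_Ioi).const_mul (q - q0))]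
      rw [integral_const, integral_const_mul, integral_indicator_const _ measurableSet_Ioi]
      simp only [integral_const, probReal_univ, measureReal_def, measure_univ, ENNReal.toReal_one, one_smul, smul_eq_mul, mul_one]
      nlinarith
    · have hI : (ν (Set.Iio q0)).toReal ≤ 1 - α := by
        have hc : ν (Set.Iio q0) = 1 - ν (Set.Ici q0) := by
          rw [← Set.compl_Ici, measure_compl measurableSet_Ici (measure_ne_top ν _)]
          simp
        have hle : ν (Set.Ici q0) ≤ 1 := prob_le_one
        rw [hc, ENNReal.toReal_sub_of_le hle (by simp)]
        simp only [ENNReal.toReal_one]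
        linarith
      have hmono := integral_mono
        (Integrable.sub (integrable_const ((1 - α) * (q0 - q)))
          ((integrable_const (1:ℝ)).indicator measurableSet_Iio |>.const_mul (q0 - q)))
        (hintq.sub hint0)
        (fun s => pinball_diff_ge_left hα0.le hα1.le hq s)
      simp only [Pi.sub_apply] at hmono
      refine le_trans ?_ hmono
      rw [integral_sub (integrable_const _)
        (((integrable_const (1:ℝ)).indicator measurableSet_Iio).const_mul (q0 - q))]
      rw [integral_const, integral_const_mul, integral_indicator_const _ measurableSet_Iio]
      simp only [integral_const, probReal_univ, measureReal_def, measure_univ, ENNReal.toReal_one, one_smul, smul_eq_mul, mul_one]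
      nlinarith
  rw [integral_sub hintq hint0] at key
  linarith

lemma max_sub_le_sq_div {d R : ℝ} (hR : 0 < R) : max (|d| - R) 0 ≤ d ^ 2 / (4 * R) := by
  rw [max_le_iff]
  refine ⟨?_, by positivity⟩
  rw [le_div_iff₀ (by positivity)]
  nlinarith [sq_nonneg (|d| - 2 * R), sq_abs d]

lemma quantize_bound {δ R c t μq : ℝ} {m : ℕ} (hm : 2 ≤ m) (hδ : 0 ≤ δ)
    (hR : R = ((m : ℝ) - 1) * δ / 2) (hc : c = μq - R) :
    |t - (c + (min (m - 1) (Int.toNat ⌊(t - c) / δ⌋) : ℕ) * δ)| ≤ δ + max (|t - μq| - R) 0 := by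
  have hm1 : (1 : ℝ) ≤ (m : ℝ) - 1 := by
    have : (2:ℝ) ≤ (m:ℝ) := by exact_mod_cast hm
    linarith
  have hR0 : 0 ≤ R := by rw [hR]; positivity
  have hmax0 : (0:ℝ) ≤ max (|t - μq| - R) 0 := le_max_right _ _
  have hcast : ((m - 1 : ℕ) : ℝ) = (m : ℝ) - 1 := by
    have h1 : 1 ≤ m := by omega
    push_cast [h1]; ring
  rcases eq_or_lt_of_le hδ with hδ0 | hδ0
  · obtain rfl : δ = 0 := hδ0.symm
    have hRz : R = 0 := by rw [hR]; ring
    subst hc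
    rw [hRz]
    simp only [mul_zero, add_zero, sub_zero]
    rw [zero_add, max_eq_left (by simp [abs_nonneg])]
  · rcases lt_or_ge t c with htc | htc
    · have hfl : ⌊(t - c) / δ⌋ < 0 := by
        apply Int.floor_lt.2
        push_cast
        rw [div_lt_iff₀ hδ0]
        nlinarith
      rw [Int.toNat_of_nonpos hfl.le, Nat.min_zero]
      have habs1 : |t - (c + ((0:ℕ):ℝ) * δ)| = c - t := by
        rw [abs_of_nonpos (by push_cast; linarith)]; push_cast; ring
      have habs2 : |t - μq| = μq - t := by
        rw [abs_of_nonpos (by linarith)]; ring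
      rw [habs1, habs2, max_eq_left (by linarith)]
      linarith
    · set u := (t - c) / δ with hu
      have hu0 : 0 ≤ u := div_nonneg (by linarith) hδ
      have hf0 : 0 ≤ ⌊u⌋ := Int.floor_nonneg.2 hu0
      set n := (⌊u⌋).toNat with hn
      have hnz : (n : ℤ) = ⌊u⌋ := Int.toNat_of_nonneg hf0
      have hnr : (n : ℝ) = ((⌊u⌋ : ℤ) : ℝ) := by exact_mod_cast hnz
      have hu1 : (n : ℝ) ≤ u := by rw [hnr]; exact Int.floor_le u
      have hu2 : u < (n : ℝ) + 1 := by
        rw [hnr]; exact_mod_cast Int.lt_floor_add_one u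
      have htc_eq : t - c = u * δ := by
        rw [hu]; field_simp
      rcases le_or_gt n (m - 1) with hcase | hcase
      · rw [min_eq_right hcase]
        have heq : t - (c + (n : ℝ) * δ) = (u - n) * δ := by
          rw [show t - (c + (n:ℝ) * δ) = (t - c) - (n:ℝ) * δ from by ring, htc_eq]; ring
        rw [heq, abs_of_nonneg (by nlinarith)]
        nlinarith
      · rw [min_eq_left hcase.le, hcast]
        have hmn : (m : ℝ) ≤ (n : ℝ) := by exact_mod_cast (by omega : m ≤ n)
        have htlarge : t - c ≥ ((m:ℝ) - 1) * δ + δ := by nlinarith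
        have h2R : ((m:ℝ) - 1) * δ = 2 * R := by rw [hR]; ring
        have habs1 : |t - (c + ((m:ℝ) - 1) * δ)| = t - μq - R := by
          rw [abs_of_nonneg (by nlinarith)]
          rw [hc, h2R]; ring
        have habs2 : |t - μq| = t - μq := by
          rw [abs_of_nonneg (by nlinarith [hδ0])]
        rw [habs1, habs2, max_eq_left (by nlinarith)]
        linarith

/-- Theorem 4.2: the gap between the best `m`-group objective
`min_{h : 𝒳 → Δ_m, q ∈ ℝ^m} E[Σᵢ hⁱ(X) ℓ_α(qᵢ, S)]` and the optimum
`E[ℓ_α(q_{1−α}(X), S)]` is nonnegative and at most `2√(Var(q_{1−α}(X))/(m−1))`. -/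
theorem plcp_population_gap
    {𝒳 : Type*} [MeasurableSpace 𝒳] (μX : Measure 𝒳) [IsProbabilityMeasure μX]
    (κ : Kernel 𝒳 ℝ) [IsMarkovKernel κ]
    (hsupp : ∀ᵐ x ∂μX, (κ x) (Set.Icc (0:ℝ) 1)ᶜ = 0)
    (α : ℝ) (hα : α ∈ Set.Ioo (0:ℝ) 1)
    (qf : 𝒳 → ℝ) (hqfmeas : Measurable qf)
    (hqf : ∀ᵐ x ∂μX, ((κ x) (Set.Iic (qf x))).toReal ≥ 1 - α ∧
      ((κ x) (Set.Ici (qf x))).toReal ≥ α)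
    (μq : ℝ) (hμq : μq = ∫ x, qf x ∂μX)
    (hvar : Integrable (fun x => (qf x - μq) ^ 2) μX)
    (m : ℕ) (hm : 2 ≤ m)
    (V opt : ℝ)
    (hV : V = sInf {v : ℝ | ∃ (h : 𝒳 → Fin m → ℝ) (q : Fin m → ℝ),
      Measurable h ∧ (∀ x, h x ∈ stdSimplex ℝ (Fin m)) ∧
      v = ∫ x, ∫ s, ∑ i : Fin m, h x i * pinball α (q i) s ∂(κ x) ∂μX})
    (hopt : opt = ∫ x, ∫ s, pinball α (qf x) s ∂(κ x) ∂μX) :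
    0 ≤ V - opt ∧
      V - opt ≤ 2 * Real.sqrt ((∫ x, (qf x - μq) ^ 2 ∂μX) / (m - 1)) := by
  obtain ⟨hα0, hα1⟩ := hα
  -- integrability of qf
  have hqf_int : Integrable qf μX := by
    have h2 : MemLp (fun x => qf x - μq) 2 μX :=
      (memLp_two_iff_integrable_sq ((hqfmeas.sub measurable_const).aestronglyMeasurable)).2 hvar
    have h1 : Integrable (fun x => qf x - μq) μX := h2.integrable (by norm_num)
    have h3 : Integrable (fun x => (qf x - μq) + μq) μX := h1.add (integrable_const μq)
    exact h3.congr (Filter.Eventually.of_forall fun x => by ring)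
  -- the candidate set
  set S : Set ℝ := {v : ℝ | ∃ (h : 𝒳 → Fin m → ℝ) (q : Fin m → ℝ),
      Measurable h ∧ (∀ x, h x ∈ stdSimplex ℝ (Fin m)) ∧
      v = ∫ x, ∫ s, ∑ i : Fin m, h x i * pinball α (q i) s ∂(κ x) ∂μX} with hS
  -- integrability of the optimal objective integrand
  have hFmeas : StronglyMeasurable (fun x => ∫ s, pinball α (qf x) s ∂κ x) := by
    apply StronglyMeasurable.integral_kernel_prod_right (f := fun x s => pinball α (qf x) s)
    exact ((pinball_measurable2 α).comp
      ((hqfmeas.comp measurable_fst).prodMk measurable_snd)).stronglyMeasurable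
  have hFbound : ∀ᵐ x ∂μX, ‖∫ s, pinball α (qf x) s ∂κ x‖ ≤ |qf x| + 1 := by
    filter_upwards [hsupp] with x hx
    exact pinball_integral_bound hx hα0.le hα1.le (qf x)
  have hFint : Integrable (fun x => ∫ s, pinball α (qf x) s ∂κ x) μX :=
    Integrable.mono' (hqf_int.abs.add (integrable_const 1))
      hFmeas.aestronglyMeasurable hFbound
  -- lower bound: every element of S is at least opt
  have hlb : ∀ v ∈ S, opt ≤ v := by
    rintro v ⟨h, q, hhm, hhs, rfl⟩
    set C : ℝ := ∑ i : Fin m, (|q i| + 1) with hC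
    have hGmeas : StronglyMeasurable
        (fun x => ∫ s, ∑ i : Fin m, h x i * pinball α (q i) s ∂κ x) := by
      apply StronglyMeasurable.integral_kernel_prod_right
        (f := fun x s => ∑ i : Fin m, h x i * pinball α (q i) s)
      apply Measurable.stronglyMeasurable
      apply Finset.measurable_sum
      intro i _
      exact (((measurable_pi_apply i).comp hhm).comp measurable_fst).mul
        ((pinball_measurable α (q i)).comp measurable_snd)
    have hGbound : ∀ᵐ x ∂μX,
        ‖∫ s, ∑ i : Fin m, h x i * pinball α (q i) s ∂κ x‖ ≤ C := by
      filter_upwards [hsupp] with x hx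
      obtain ⟨hpos, hsum⟩ := hhs x
      have hle1 : ∀ i : Fin m, h x i ≤ 1 := by
        intro i
        calc h x i ≤ ∑ j : Fin m, h x j :=
              Finset.single_le_sum (fun j _ => hpos j) (Finset.mem_univ i)
          _ = 1 := hsum
      have hbd : ∀ᵐ s ∂κ x, ‖∑ i : Fin m, h x i * pinball α (q i) s‖ ≤ C := by
        filter_upwards [ae_mem_Icc hx] with s hs
        calc ‖∑ i : Fin m, h x i * pinball α (q i) s‖
            ≤ ∑ i : Fin m, ‖h x i * pinball α (q i) s‖ := norm_sum_le _ _
          _ ≤ ∑ i : Fin m, (|q i| + 1) := by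
              apply Finset.sum_le_sum
              intro i _
              rw [norm_mul, Real.norm_eq_abs, Real.norm_eq_abs,
                abs_of_nonneg (hpos i), abs_of_nonneg (pinball_nonneg hα0.le hα1.le _ _)]
              have hp : pinball α (q i) s ≤ |q i| + 1 := by
                calc pinball α (q i) s ≤ |s - q i| := pinball_le_abs hα0.le hα1.le _ _
                  _ ≤ |s| + |q i| := abs_sub _ _
                  _ ≤ |q i| + 1 := by rw [abs_of_nonneg hs.1]; linarith [hs.2]
              calc h x i * pinball α (q i) s ≤ 1 * pinball α (q i) s := by
                    apply mul_le_mul_of_nonneg_right (hle1 i)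
                      (pinball_nonneg hα0.le hα1.le _ _)
                _ = pinball α (q i) s := one_mul _
                _ ≤ |q i| + 1 := hp
      have := norm_integral_le_of_norm_le_const (μ := κ x) hbd
      simpa using this
    have hGint : Integrable (fun x => ∫ s, ∑ i : Fin m, h x i * pinball α (q i) s ∂κ x) μX :=
      Integrable.mono' (integrable_const C) hGmeas.aestronglyMeasurable hGbound
    rw [hopt]
    apply integral_mono_ae hFint hGint
    filter_upwards [hsupp, hqf] with x hx hqx
    obtain ⟨hpos, hsum⟩ := hhs x
    calc ∫ s, pinball α (qf x) s ∂κ x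
        = ∑ i : Fin m, h x i * ∫ s, pinball α (qf x) s ∂κ x := by
          rw [← Finset.sum_mul, hsum, one_mul]
      _ ≤ ∑ i : Fin m, h x i * ∫ s, pinball α (q i) s ∂κ x := by
          apply Finset.sum_le_sum
          intro i _
          exact mul_le_mul_of_nonneg_left
            (quantile_opt hx ⟨hα0, hα1⟩ hqx.1 hqx.2 (q i)) (hpos i)
      _ = ∫ s, ∑ i : Fin m, h x i * pinball α (q i) s ∂κ x := by
          rw [integral_finset_sum _
            (fun i _ => (pinball_integrable hx hα0.le hα1.le (q i)).const_mul _)]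
          exact Finset.sum_congr rfl fun i _ => (integral_const_mul _ _).symm
  -- construction of the witness
  set σ2 : ℝ := ∫ x, (qf x - μq) ^ 2 ∂μX with hσ2def
  have hσ2_0 : 0 ≤ σ2 := integral_nonneg (fun x => sq_nonneg _)
  have hm1 : (1:ℝ) ≤ (m:ℝ) - 1 := by
    have : (2:ℝ) ≤ (m:ℝ) := by exact_mod_cast hm
    linarith
  set sm : ℝ := Real.sqrt ((m:ℝ) - 1) with hsm
  have hsm0 : 0 < sm := Real.sqrt_pos.2 (by linarith)
  have hsmsq : sm * sm = (m:ℝ) - 1 := Real.mul_self_sqrt (by linarith)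
  set σ : ℝ := Real.sqrt σ2 with hσ
  have hσ0 : 0 ≤ σ := Real.sqrt_nonneg _
  have hσσ : σ * σ = σ2 := Real.mul_self_sqrt hσ2_0
  set δ : ℝ := σ / sm with hδ
  have hδ0 : 0 ≤ δ := div_nonneg hσ0 hsm0.le
  set R : ℝ := ((m:ℝ) - 1) * δ / 2 with hRdef
  set c : ℝ := μq - R with hcdef
  set jn : 𝒳 → ℕ := fun x => min (m - 1) (Int.toNat ⌊(qf x - c) / δ⌋) with hjn
  have hjn_meas : Measurable jn := by
    have h1 : Measurable (fun x => (qf x - c) / δ) := (hqfmeas.sub measurable_const).div_const δ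
    exact (measurable_from_top (f := fun z : ℤ => min (m - 1) z.toNat)).comp
      (Int.measurable_floor.comp h1)
  have hjn_lt : ∀ x, jn x < m := fun x => lt_of_le_of_lt (min_le_left _ _) (by omega)
  set hH : 𝒳 → Fin m → ℝ := fun x i => if (i : ℕ) = jn x then 1 else 0 with hHdef
  set Q : 𝒳 → ℝ := fun x => c + (jn x : ℝ) * δ with hQdef
  set qL : Fin m → ℝ := fun i => c + (i : ℕ) * δ with hqLdef
  have hHmeas : Measurable hH := by
    apply measurable_pi_lambda
    intro i
    exact Measurable.ite (hjn_meas MeasurableSet.of_discrete) measurable_const measurable_const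
  have hHsimplex : ∀ x, hH x ∈ stdSimplex ℝ (Fin m) := by
    intro x
    refine ⟨fun i => by simp only [hHdef]; split_ifs <;> norm_num, ?_⟩
    have hcond : ∀ i : Fin m, ((i : ℕ) = jn x) = (i = (⟨jn x, hjn_lt x⟩ : Fin m)) := by
      intro i
      simp only [Fin.ext_iff]
    simp only [hHdef, hcond, Finset.sum_ite_eq', Finset.mem_univ, if_true]
  have hcollapse : ∀ x s, ∑ i : Fin m, hH x i * pinball α (qL i) s = pinball α (Q x) s := by
    intro x s
    have hcond : ∀ i : Fin m, ((i : ℕ) = jn x) = (i = (⟨jn x, hjn_lt x⟩ : Fin m)) := by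
      intro i
      simp only [Fin.ext_iff]
    simp only [hHdef, hcond, ite_mul, one_mul, zero_mul, Finset.sum_ite_eq',
      Finset.mem_univ, if_true]
    rfl
  set v0 : ℝ := ∫ x, ∫ s, pinball α (Q x) s ∂κ x ∂μX with hv0
  have hv0mem : v0 ∈ S := by
    refine ⟨hH, qL, hHmeas, hHsimplex, ?_⟩
    rw [hv0]
    congr 1
    funext x
    congr 1
    funext s
    rw [hcollapse]
  -- V bounds
  have hbdd : BddBelow S := ⟨opt, fun b hb => hlb b hb⟩
  have hVopt : opt ≤ V := by
    rw [hV]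
    exact le_csInf ⟨v0, hv0mem⟩ (fun b hb => hlb b hb)
  have hVv0 : V ≤ v0 := by
    rw [hV]
    exact csInf_le hbdd hv0mem
  -- upper bound on v0 - opt
  have hQmeas : Measurable Q := by
    apply Measurable.add measurable_const
    exact (measurable_from_top (f := fun n : ℕ => (n:ℝ))).comp hjn_meas |>.mul_const δ
  have hQbd : ∀ x, |Q x| ≤ |c| + (m:ℝ) * δ := by
    intro x
    have h1 : (jn x : ℝ) ≤ (m:ℝ) := by exact_mod_cast (hjn_lt x).le
    have h2 : 0 ≤ (jn x : ℝ) := Nat.cast_nonneg _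
    calc |Q x| ≤ |c| + |(jn x : ℝ) * δ| := abs_add_le _ _
      _ = |c| + (jn x : ℝ) * δ := by rw [abs_of_nonneg (mul_nonneg h2 hδ0)]
      _ ≤ |c| + (m:ℝ) * δ := by nlinarith
  have hQint : Integrable Q μX :=
    Integrable.mono' (integrable_const (|c| + (m:ℝ) * δ)) hQmeas.aestronglyMeasurable
      (Filter.Eventually.of_forall fun x => by rw [Real.norm_eq_abs]; exact hQbd x)
  have hFQmeas : StronglyMeasurable (fun x => ∫ s, pinball α (Q x) s ∂κ x) := by
    apply StronglyMeasurable.integral_kernel_prod_right (f := fun x s => pinball α (Q x) s)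
    exact ((pinball_measurable2 α).comp
      ((hQmeas.comp measurable_fst).prodMk measurable_snd)).stronglyMeasurable
  have hFQint : Integrable (fun x => ∫ s, pinball α (Q x) s ∂κ x) μX := by
    apply Integrable.mono' (integrable_const (|c| + (m:ℝ) * δ + 1))
      hFQmeas.aestronglyMeasurable
    filter_upwards [hsupp] with x hx
    calc ‖∫ s, pinball α (Q x) s ∂κ x‖ ≤ |Q x| + 1 :=
          pinball_integral_bound hx hα0.le hα1.le (Q x)
      _ ≤ |c| + (m:ℝ) * δ + 1 := by linarith [hQbd x]
  have hstep1 : v0 - opt ≤ ∫ x, |Q x - qf x| ∂μX := by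
    rw [hv0, hopt, ← integral_sub hFQint hFint]
    apply integral_mono_ae (hFQint.sub hFint) (hQint.sub hqf_int).abs
    filter_upwards [hsupp] with x hx
    have h1 : ∫ s, pinball α (Q x) s ∂κ x - ∫ s, pinball α (qf x) s ∂κ x
        = ∫ s, (pinball α (Q x) s - pinball α (qf x) s) ∂κ x := by
      rw [integral_sub (pinball_integrable hx hα0.le hα1.le _)
        (pinball_integrable hx hα0.le hα1.le _)]
    calc ∫ s, pinball α (Q x) s ∂κ x - ∫ s, pinball α (qf x) s ∂κ x
        = ∫ s, (pinball α (Q x) s - pinball α (qf x) s) ∂κ x := h1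
      _ ≤ ∫ _, |Q x - qf x| ∂κ x := by
          apply integral_mono
            ((pinball_integrable hx hα0.le hα1.le _).sub
              (pinball_integrable hx hα0.le hα1.le _))
            (integrable_const _)
          intro s
          simp only [Pi.sub_apply]
          have := pinball_lipschitz hα0.le hα1.le (Q x) (qf x) s
          linarith
      _ = |Q x - qf x| := by simp
  have hmaxint : Integrable (fun x => max (|qf x - μq| - R) 0) μX := by
    have hR0 : 0 ≤ R := by rw [hRdef]; positivity
    apply Integrable.mono' ((hqf_int.sub (integrable_const μq)).abs)
    · exact ((((hqfmeas.sub measurable_const).abs.sub measurable_const).max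
        measurable_const)).aestronglyMeasurable
    · apply Filter.Eventually.of_forall
      intro x
      rw [Real.norm_eq_abs, abs_of_nonneg (le_max_right _ _)]
      simp only [Pi.abs_apply, Pi.sub_apply]
      rw [max_le_iff]
      constructor
      · linarith [abs_nonneg (qf x - μq)]
      · exact abs_nonneg _
  have hstep2 : ∫ x, |Q x - qf x| ∂μX ≤ δ + ∫ x, max (|qf x - μq| - R) 0 ∂μX := by
    have hpt : ∀ x, |Q x - qf x| ≤ δ + max (|qf x - μq| - R) 0 := by
      intro x
      rw [abs_sub_comm]
      exact quantize_bound hm hδ0 hRdef hcdef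
    calc ∫ x, |Q x - qf x| ∂μX
        ≤ ∫ x, (δ + max (|qf x - μq| - R) 0) ∂μX := by
          apply integral_mono (hQint.sub hqf_int).abs
            ((integrable_const δ).add hmaxint) hpt
      _ = δ + ∫ x, max (|qf x - μq| - R) 0 ∂μX := by
          rw [integral_add (integrable_const δ) hmaxint, integral_const]
          simp
  have hstep3 : ∫ x, max (|qf x - μq| - R) 0 ∂μX ≤ σ / (2 * sm) := by
    rcases eq_or_lt_of_le hσ2_0 with hz | hpos
    · -- σ2 = 0
      have hσz : σ = 0 := by rw [hσ, ← hz, Real.sqrt_zero]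
      have hδz : δ = 0 := by rw [hδ, hσz, zero_div]
      have hRz : R = 0 := by rw [hRdef, hδz]; ring
      have hae : ∀ᵐ x ∂μX, (qf x - μq) ^ 2 = 0 := by
        have := (integral_eq_zero_iff_of_nonneg_ae
          (Filter.Eventually.of_forall fun x => sq_nonneg (qf x - μq)) hvar).1 hz.symm
        filter_upwards [this] with x hx
        simpa using hx
      have : ∫ x, max (|qf x - μq| - R) 0 ∂μX = 0 := by
        apply integral_eq_zero_of_ae
        filter_upwards [hae] with x hx
        have hq0 : qf x - μq = 0 := sq_eq_zero_iff.1 hx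
        rw [hq0, abs_zero, hRz]
        simp
      rw [this, hσz]
      positivity
    · -- σ2 > 0
      have hσpos : 0 < σ := Real.sqrt_pos.2 hpos
      have hδpos : 0 < δ := div_pos hσpos hsm0
      have hRpos : 0 < R := by rw [hRdef]; positivity
      calc ∫ x, max (|qf x - μq| - R) 0 ∂μX
          ≤ ∫ x, (qf x - μq) ^ 2 / (4 * R) ∂μX := by
            apply integral_mono hmaxint (hvar.div_const _)
            intro x
            exact max_sub_le_sq_div hRpos
        _ = σ2 / (4 * R) := by rw [integral_div, ← hσ2def]
        _ = σ / (2 * sm) := by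
            rw [hRdef, hδ]
            rw [← hsmsq]
            field_simp
            rw [← hσσ]
            ring
  have hsqrt : Real.sqrt (σ2 / ((m:ℝ) - 1)) = σ / sm := by
    rw [Real.sqrt_div hσ2_0, hσ, hsm]
  have hfinal : V - opt ≤ 2 * Real.sqrt (σ2 / ((m:ℝ) - 1)) := by
    rw [hsqrt]
    have hδval : δ = σ / sm := hδ
    have h1 : v0 - opt ≤ δ + σ / (2 * sm) := by
      linarith [hstep1, hstep2, hstep3]
    have h2 : δ + σ / (2 * sm) ≤ 2 * (σ / sm) := by
      rw [hδval]
      have heq : σ / (2 * sm) = σ / sm / 2 := by rw [div_div, mul_comm]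
      rw [heq]
      have hs : 0 ≤ σ / sm := div_nonneg hσ0 hsm0.le
      linarith
    linarith [hVv0]
  exact ⟨by linarith, hfinal⟩
end
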